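/- For all Dyck paths P and Q of size 2k+1 having no peak of even y-coordinate and no valley of odd x-coordinate, the number traj(P,Q) of components of the meander formed by the matching of P above and the matching of Q below is odd. -/

import Mathlib

/-- A Dyck path of size `n`: a list of booleans (`true` = north step, `false` = east step)
from `(0,0)` to `(n,n)` staying weakly above the diagonal `y = x`. -/
def IsDyckPath (n : ℕ) (w : List Bool) : Prop :=
  w.length = 2 * n ∧ w.count true = n ∧
    ∀ k, (w.take k).count false ≤ (w.take k).count true

/-- The `y`-coordinate of the lattice point reached after `k` steps. -/
def ycoord (w : List Bool) (k : ℕ) : ℕ := (w.take k).count true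

/-- The `x`-coordinate of the lattice point reached after `k` steps. -/
def xcoord (w : List Bool) (k : ℕ) : ℕ := (w.take k).count false

/-- A peak: a north step at position `i` followed by an east step. -/
def IsPeak (w : List Bool) (i : ℕ) : Prop := w[i]? = some true ∧ w[i+1]? = some false

/-- A valley: an east step at position `i` followed by a north step. -/
def IsValley (w : List Bool) (i : ℕ) : Prop := w[i]? = some false ∧ w[i+1]? = some true

/-- Height above the diagonal after `k` steps. -/
def pdepth (w : List Bool) (k : ℕ) : ℤ := (ycoord w k : ℤ) - (xcoord w k : ℤ)

/-- Step `i` (a north step) of `w` is matched with step `j` (an east step):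
the facing east step at the same height (balanced-parentheses matching). -/
def Matches (w : List Bool) (i j : ℕ) : Prop :=
  i < j ∧ w[i]? = some true ∧ w[j]? = some false ∧
    pdepth w (j + 1) = pdepth w i ∧ ∀ k, i < k → k ≤ j → pdepth w i < pdepth w k

/-- The graph on `m` points whose edges are the upper arches and the lower arches;
its connected components are the components of the corresponding meander. -/
def meanderGraph (m : ℕ) (upper lower : ℕ → ℕ → Prop) : SimpleGraph (Fin m) where
  Adj i j := i ≠ j ∧ (upper i.1 j.1 ∨ upper j.1 i.1 ∨ lower i.1 j.1 ∨ lower j.1 i.1)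
  symm := by
    constructor
    intro i j h
    exact ⟨h.1.symm, by tauto⟩
  loopless := by
    constructor
    intro i h
    exact h.1 rfl

/-- The number of components of the meander with the matching of `P` above and the
matching of `Q` below. -/
noncomputable def trajPQ (n : ℕ) (P Q : List Bool) : ℕ :=
  Nat.card (meanderGraph (2 * n) (Matches P) (Matches Q)).ConnectedComponent

/-- The number of components of the meander with the matching of `P` above and the
rainbow matching `i ↦ 2n - 1 - i` below. -/
noncomputable def traj (n : ℕ) (P : List Bool) : ℕ :=
  Nat.card (meanderGraph (2 * n) (Matches P)
    (fun i j => i + j + 1 = 2 * n)).ConnectedComponent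

/-- No peak with even `y`-coordinate and no valley with odd `x`-coordinate. -/
def NoBadCorner (w : List Bool) : Prop :=
  (∀ i, IsPeak w i → Odd (ycoord w (i + 1))) ∧
  (∀ i, IsValley w i → Even (xcoord w (i + 1)))

/-- A bad corner: a peak with even `y`-coordinate or a valley with odd `x`-coordinate. -/
def IsBadCorner (w : List Bool) (i : ℕ) : Prop :=
  (IsPeak w i ∧ Even (ycoord w (i + 1))) ∨ (IsValley w i ∧ Odd (xcoord w (i + 1)))

/-- Interchange the two steps of the corner at positions `i`, `i+1`. -/
def swapCorner (w : List Bool) (i : ℕ) : List Bool :=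
  (w.set i (w.getD (i + 1) true)).set (i + 1) (w.getD i true)

open Classical in
/-- The involution `φ`: swap the two steps of the first bad corner, if any. -/
noncomputable def phiMap (w : List Bool) : List Bool :=
  if h : ∃ i, IsBadCorner w i then swapCorner w (Nat.find h) else w

/-- The number of unit squares between a Dyck path and the diagonal `y = x`. -/
def area (w : List Bool) : ℕ :=
  ((List.range w.length).map fun i =>
    if w.getD i true then 0 else ycoord w i - xcoord w i - 1).sum

/-- The zigzag Dyck path `(NE)^m`. -/
def zigzag (m : ℕ) : List Bool := (List.replicate m [true, false]).flatten

/-- `N^{2a_1} E^{2b_1} ⋯ N^{2a_t} E^{2b_t}` for `ab = [(a_1,b_1),…,(a_t,b_t)]`. -/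
def doubledWord (ab : List (ℕ × ℕ)) : List Bool :=
  (ab.map fun p => List.replicate (2 * p.1) true ++ List.replicate (2 * p.2) false).flatten

/-- `N^{a_1} E^{b_1} ⋯ N^{a_t} E^{b_t}` for `ab = [(a_1,b_1),…,(a_t,b_t)]`. -/
def halfWord (ab : List (ℕ × ℕ)) : List Bool :=
  (ab.map fun p => List.replicate p.1 true ++ List.replicate p.2 false).flatten

/-- All peaks at odd height (`height` = `y - x` at the peak's lattice point). -/
def AllPeaksOdd (w : List Bool) : Prop :=
  ∀ i, IsPeak w i → Odd (ycoord w (i + 1) - xcoord w (i + 1))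

/-- All peaks at even height. -/
def AllPeaksEven (w : List Bool) : Prop :=
  ∀ i, IsPeak w i → Even (ycoord w (i + 1) - xcoord w (i + 1))

/-- Steps of a Motzkin path: up, horizontal, down. -/
inductive MStep | U | H | D
deriving DecidableEq

/-- The total height change along a list of Motzkin steps. -/
def msum (l : List MStep) : ℤ :=
  (l.map fun s => match s with | MStep.U => 1 | MStep.H => 0 | MStep.D => -1).sum

/-- A Motzkin path of length `n`. -/
def IsMotzkin (n : ℕ) (l : List MStep) : Prop :=
  l.length = n ∧ msum l = 0 ∧ ∀ k, 0 ≤ msum (l.take k)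

/-- A Riordan path of length `n`: a Motzkin path with no horizontal step on the `x`-axis. -/
def IsRiordan (n : ℕ) (l : List MStep) : Prop :=
  IsMotzkin n l ∧ ∀ i, l[i]? = some MStep.H → msum (l.take i) ≠ 0

/-- The map `φ_A` from Dyck paths of size `n+1` (all peaks at odd height)
to Motzkin paths of length `n`: `v_j` is read off from steps `p_{2j} p_{2j+1}`. -/
def phiA (n : ℕ) (P : List Bool) : List MStep :=
  (List.range n).map fun j =>
    match P.getD (2 * j + 1) true, P.getD (2 * j + 2) true with
    | true, true => MStep.U
    | false, true => MStep.H
    | _, _ => MStep.D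

/-- The map `φ_B` from Dyck paths of size `n` (all peaks at even height)
to Riordan paths of length `n`: `u_j` is read off from steps `p_{2j-1} p_{2j}`. -/
def phiB (n : ℕ) (P : List Bool) : List MStep :=
  (List.range n).map fun j =>
    match P.getD (2 * j) true, P.getD (2 * j + 1) true with
    | true, true => MStep.U
    | false, true => MStep.H
    | _, _ => MStep.D

/-! ### Auxiliary development -/

namespace MeanderParity

lemma count_true_add_count_false (l : List Bool) :
    l.count true + l.count false = l.length := by
  induction l with
  | nil => simp
  | cons a l ih => cases a <;> simp [List.count_cons] <;> omega

lemma getElem?_lt {w : List Bool} {i : ℕ} {b : Bool} (h : w[i]? = some b) : i < w.length :=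
  (List.getElem?_eq_some_iff.mp h).1

lemma take_succ_of_getElem? {w : List Bool} {i : ℕ} {b : Bool} (h : w[i]? = some b) :
    w.take (i+1) = w.take i ++ [b] := by
  rw [List.take_succ, h]; rfl

lemma ycoord_succ {w : List Bool} {i : ℕ} {b : Bool} (h : w[i]? = some b) :
    ycoord w (i+1) = ycoord w i + (if b then 1 else 0) := by
  unfold ycoord
  rw [take_succ_of_getElem? h, List.count_append]
  cases b <;> simp

lemma xcoord_succ {w : List Bool} {i : ℕ} {b : Bool} (h : w[i]? = some b) :
    xcoord w (i+1) = xcoord w i + (if b then 0 else 1) := by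
  unfold xcoord
  rw [take_succ_of_getElem? h, List.count_append]
  cases b <;> simp

lemma pdepth_succ_true {w : List Bool} {i : ℕ} (h : w[i]? = some true) :
    pdepth w (i+1) = pdepth w i + 1 := by
  have hy := ycoord_succ h
  have hx := xcoord_succ h
  simp at hy hx
  unfold pdepth
  rw [hy, hx]
  push_cast
  ring

lemma pdepth_succ_false {w : List Bool} {i : ℕ} (h : w[i]? = some false) :
    pdepth w (i+1) = pdepth w i - 1 := by
  have hy := ycoord_succ h
  have hx := xcoord_succ h
  simp at hy hx
  unfold pdepth
  rw [hy, hx]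
  push_cast
  ring

lemma pdepth_zero (w : List Bool) : pdepth w 0 = 0 := by
  simp [pdepth, ycoord, xcoord]

lemma ycoord_add_xcoord (w : List Bool) {i : ℕ} (hi : i ≤ w.length) :
    ycoord w i + xcoord w i = i := by
  unfold ycoord xcoord
  rw [count_true_add_count_false, List.length_take]
  omega

lemma pdepth_nonneg {n : ℕ} {w : List Bool} (hw : IsDyckPath n w) (i : ℕ) :
    0 ≤ pdepth w i := by
  have h : xcoord w i ≤ ycoord w i := hw.2.2 i
  unfold pdepth
  omega

lemma pdepth_parity {w : List Bool} {i : ℕ} (hi : i ≤ w.length) :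
    (2:ℤ) ∣ pdepth w i - i := by
  have h := ycoord_add_xcoord w hi
  unfold pdepth
  omega

lemma first_true {n : ℕ} {w : List Bool} (hw : IsDyckPath n w) (hlen : 0 < w.length) :
    w[0]? = some true := by
  have h0 : w[0]? = some (w[0]'hlen) := List.getElem?_eq_getElem hlen
  rcases hb : w[0]'hlen with _ | _
  · exfalso
    have h1 := hw.2.2 1
    rw [hb] at h0
    have ht : w.take 1 = [false] := by
      have := take_succ_of_getElem? h0
      simpa using this
    rw [ht] at h1
    simp at h1
  · rw [hb] at h0; exact h0

/-- If the mod-4 property holds at odd position `m = 2a+1`, then steps `2a+1` and `2a+2`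
are equal (no corner at an odd position). -/
lemma no_odd_corner {n : ℕ} {w : List Bool} (hw : IsDyckPath n w) (hc : NoBadCorner w)
    {a : ℕ} (ih : (4:ℤ) ∣ pdepth w (2*a+1) - (2*a+1)) (hl : 2*a+2 < w.length) :
    ∃ b : Bool, w[2*a+1]? = some b ∧ w[2*a+2]? = some b := by
  have h1 : (2*a+1) < w.length := by omega
  have hb1 : w[2*a+1]? = some (w[2*a+1]'h1) := List.getElem?_eq_getElem h1
  have hb2 : w[2*a+2]? = some (w[2*a+2]'hl) := List.getElem?_eq_getElem hl
  have hsum : ycoord w (2*a+1) + xcoord w (2*a+1) = 2*a+1 :=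
    ycoord_add_xcoord w (by omega)
  have ih' : (4:ℤ) ∣ (ycoord w (2*a+1) : ℤ) - (xcoord w (2*a+1)) - (2*a+1) := ih
  rcases e1 : w[2*a+1]'h1 with _ | _ <;> rcases e2 : w[2*a+2]'hl with _ | _
  · exact ⟨false, by rw [e1] at hb1; exact hb1, by rw [e2] at hb2; exact hb2⟩
  · -- valley at 2a+1
    exfalso
    have hv : IsValley w (2*a+1) := ⟨by rw [e1] at hb1; exact hb1, by rw [e2] at hb2; exact hb2⟩
    have hx := hc.2 _ hv
    rw [Nat.even_iff] at hx
    have hxs : xcoord w (2*a+1+1) = xcoord w (2*a+1) + 1 := by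
      rw [e1] at hb1
      have := xcoord_succ hb1
      simpa using this
    rw [show 2*a+1+1 = 2*a+2 by ring] at hxs
    rw [hxs] at hx
    omega
  · -- peak at 2a+1
    exfalso
    have hv : IsPeak w (2*a+1) := ⟨by rw [e1] at hb1; exact hb1, by rw [e2] at hb2; exact hb2⟩
    have hy := hc.1 _ hv
    rw [Nat.odd_iff] at hy
    have hys : ycoord w (2*a+1+1) = ycoord w (2*a+1) + 1 := by
      rw [e1] at hb1
      have := ycoord_succ hb1
      simpa using this
    rw [show 2*a+1+1 = 2*a+2 by ring] at hys
    rw [hys] at hy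
    omega
  · exact ⟨true, by rw [e1] at hb1; exact hb1, by rw [e2] at hb2; exact hb2⟩

/-- The mod-4 lemma: at odd positions, the depth is congruent to the position mod 4. -/
lemma key4 {n : ℕ} {w : List Bool} (hw : IsDyckPath n w) (hc : NoBadCorner w) :
    ∀ a : ℕ, 2*a+1 ≤ w.length → (4:ℤ) ∣ pdepth w (2*a+1) - (2*a+1) := by
  intro a
  induction a with
  | zero =>
    intro h
    have h0 := first_true hw (by omega)
    have h1 := pdepth_succ_true h0
    rw [pdepth_zero] at h1
    rw [show 2*0+1 = 0+1 by ring, h1]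
    push_cast
  | succ a ih =>
    intro h
    have ih' := ih (by omega)
    obtain ⟨b, hb1, hb2⟩ := no_odd_corner hw hc ih' (by omega)
    have hb2' : w[2*a+1+1]? = some b := by rw [show 2*a+1+1 = 2*a+2 by ring]; exact hb2
    rw [show 2*(a+1)+1 = 2*a+1+1+1 by ring]
    rcases b with _ | _
    · have e1 := pdepth_succ_false hb1
      have e2 := pdepth_succ_false hb2'
      rw [e2, e1]
      push_cast
      omega
    · have e1 := pdepth_succ_true hb1
      have e2 := pdepth_succ_true hb2'
      rw [e2, e1]
      push_cast
      omega

lemma key4' {n : ℕ} {w : List Bool} (hw : IsDyckPath n w) (hc : NoBadCorner w)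
    {m : ℕ} (hm : m % 2 = 1) (hl : m ≤ w.length) :
    (4:ℤ) ∣ pdepth w m - m := by
  obtain ⟨a, rfl⟩ : ∃ a, m = 2*a+1 := ⟨m/2, by omega⟩
  exact key4 hw hc a hl

lemma doubling {n : ℕ} {w : List Bool} (hw : IsDyckPath n w) (hc : NoBadCorner w)
    {m : ℕ} (hm : m % 2 = 1) (hl : m + 1 < w.length) :
    ∃ b : Bool, w[m]? = some b ∧ w[m+1]? = some b := by
  obtain ⟨a, rfl⟩ : ∃ a, m = 2*a+1 := ⟨m/2, by omega⟩
  obtain ⟨b, h1, h2⟩ := no_odd_corner hw hc (key4 hw hc a (by omega)) (by omega)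
  exact ⟨b, h1, by rw [show 2*a+1+1 = 2*a+2 by ring]; exact h2⟩

lemma interior_pos {n : ℕ} {w : List Bool} (hw : IsDyckPath n w) (hc : NoBadCorner w)
    {x : ℕ} (hx0 : 0 < x) (hxl : x < w.length) : 1 ≤ pdepth w x := by
  have hnn := pdepth_nonneg hw x
  rcases Nat.even_or_odd x with he | ho
  · -- even case
    rw [Nat.even_iff] at he
    by_contra hlt
    have hz : pdepth w x = 0 := by omega
    obtain ⟨b, hb1, hb2⟩ := doubling hw hc (m := x - 1) (by omega) (by omega)
    rw [show x - 1 + 1 = x by omega] at hb2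
    have n1 := pdepth_nonneg hw (x - 1)
    have n2 := pdepth_nonneg hw (x + 1)
    rcases b with _ | _
    · have e2 := pdepth_succ_false hb2
      omega
    · have e1 := pdepth_succ_true hb1
      rw [show x - 1 + 1 = x by omega] at e1
      omega
  · rw [Nat.odd_iff] at ho
    have h4 := key4' hw hc ho (by omega)
    omega

lemma pdepth_full {n : ℕ} {w : List Bool} (hw : IsDyckPath n w) :
    pdepth w w.length = 0 := by
  have h1 : w.take w.length = w := List.take_length
  have h2 := count_true_add_count_false w
  have h3 := hw.2.1
  have h4 := hw.1
  unfold pdepth ycoord xcoord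
  rw [h1]
  omega

lemma top_arch {n : ℕ} {w : List Bool} (hw : IsDyckPath n w) (hc : NoBadCorner w)
    (hn : 0 < n) : Matches w 0 (w.length - 1) := by
  have hlen : w.length = 2*n := hw.1
  have hl2 : 2 ≤ w.length := by omega
  have hfull := pdepth_full hw
  have hlast : w[w.length - 1]? = some false := by
    have hl1 : w.length - 1 < w.length := by omega
    have hb : w[w.length - 1]? = some (w[w.length - 1]'hl1) := List.getElem?_eq_getElem hl1
    have hint : 1 ≤ pdepth w (w.length - 1) := interior_pos hw hc (by omega) hl1
    rcases e : w[w.length - 1]'hl1 with _ | _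
    · rw [e] at hb; exact hb
    · exfalso
      rw [e] at hb
      have := pdepth_succ_true hb
      rw [show w.length - 1 + 1 = w.length by omega] at this
      omega
  refine ⟨by omega, first_true hw (by omega), hlast, ?_, ?_⟩
  · rw [show w.length - 1 + 1 = w.length by omega, hfull, pdepth_zero]
  · intro m hm1 hm2
    rw [pdepth_zero]
    exact interior_pos hw hc hm1 (by omega)

lemma arch_parity {w : List Bool} {i j : ℕ} (hm : Matches w i j) :
    i % 2 ≠ j % 2 := by
  obtain ⟨hij, hwi, hwj, heq, _⟩ := hm
  have hi := getElem?_lt hwi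
  have hj := getElem?_lt hwj
  have p1 := pdepth_parity (w := w) (i := i) (by omega)
  have p2 := pdepth_parity (w := w) (i := j+1) (by omega)
  omega

lemma arch_flip_h {n : ℕ} {w : List Bool} (hw : IsDyckPath n w) (hc : NoBadCorner w)
    {i j : ℕ} (hm : Matches w i j) :
    ((i+1)/2) % 2 ≠ ((j+1)/2) % 2 := by
  have hpar := arch_parity hm
  obtain ⟨hij, hwi, hwj, heq, _⟩ := hm
  have hi := getElem?_lt hwi
  have hj := getElem?_lt hwj
  rcases Nat.even_or_odd i with he | ho
  · -- i even, j odd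
    rw [Nat.even_iff] at he
    have hjo : j % 2 = 1 := by omega
    have e1 := pdepth_succ_true hwi
    have e2 := pdepth_succ_false hwj
    have k1 := key4' hw hc (m := i+1) (by omega) (by omega)
    have k2 := key4' hw hc (m := j) hjo (by omega)
    omega
  · rw [Nat.odd_iff] at ho
    have hje : j % 2 = 0 := by omega
    have k1 := key4' hw hc (m := i) ho (by omega)
    have k2 := key4' hw hc (m := j+1) (by omega) (by omega)
    omega

/-- The involution on points: swap `2c+1 ↔ 2c+2`, fixing `0` and `N-1`. -/
def sig (N x : ℕ) : ℕ :=
  if x = 0 ∨ x = N - 1 then x else if x % 2 = 1 then x + 1 else x - 1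

lemma sig_zero (N : ℕ) : sig N 0 = 0 := by
  unfold sig; rw [if_pos (Or.inl rfl)]

lemma sig_last (N : ℕ) : sig N (N-1) = N-1 := by
  unfold sig; rw [if_pos (Or.inr rfl)]

lemma sig_odd {N x : ℕ} (hx : x % 2 = 1) (hN : x ≠ N - 1) : sig N x = x + 1 := by
  unfold sig
  rw [if_neg (by omega), if_pos hx]

lemma sig_even {N x : ℕ} (hx : x % 2 = 0) (h0 : x ≠ 0) (hN : N % 2 = 0) (h2 : 2 ≤ N) :
    sig N x = x - 1 := by
  unfold sig
  rw [if_neg (by omega), if_neg (by omega)]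

lemma sig_lt {N x : ℕ} (hN : N % 2 = 0) (h2 : 2 ≤ N) (hx : x < N) : sig N x < N := by
  by_cases h0 : x = 0 ∨ x = N - 1
  · unfold sig; rw [if_pos h0]; omega
  · push_neg at h0
    rcases Nat.even_or_odd x with he | ho
    · rw [Nat.even_iff] at he
      rw [sig_even he h0.1 hN h2]; omega
    · rw [Nat.odd_iff] at ho
      rw [sig_odd ho h0.2]; omega

lemma sig_invol {N x : ℕ} (hN : N % 2 = 0) (h2 : 2 ≤ N) (hx : x < N) :
    sig N (sig N x) = x := by
  by_cases h0 : x = 0 ∨ x = N - 1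
  · unfold sig; rw [if_pos h0, if_pos h0]
  · push_neg at h0
    rcases Nat.even_or_odd x with he | ho
    · rw [Nat.even_iff] at he
      rw [sig_even he h0.1 hN h2, sig_odd (by omega) (by omega)]
      omega
    · rw [Nat.odd_iff] at ho
      rw [sig_odd ho h0.2, sig_even (by omega) (by omega) hN h2]
      omega

lemma matches_sig {n : ℕ} {w : List Bool} (hw : IsDyckPath n w) (hc : NoBadCorner w)
    {i j : ℕ} (hm : Matches w i j) :
    Matches w (sig w.length i) (sig w.length j) ∨
      Matches w (sig w.length j) (sig w.length i) := by
  have hpar := arch_parity hm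
  obtain ⟨hij, hwi, hwj, heq, hmin⟩ := hm
  have hi := getElem?_lt hwi
  have hj := getElem?_lt hwj
  set N := w.length with hNdef
  have hNeven : N % 2 = 0 := by have := hw.1; omega
  have hN2 : 2 ≤ N := by omega
  by_cases hi0 : i = 0
  · -- top arch, fixed by sig
    subst hi0
    have hjN : j = N - 1 := by
      by_contra hne
      have hint : 1 ≤ pdepth w (j+1) := interior_pos hw hc (by omega) (by omega)
      rw [heq, pdepth_zero] at hint
      omega
    have e1 : sig N 0 = 0 := sig_zero N
    have e2 : sig N j = j := by rw [hjN]; exact sig_last N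
    rw [e1, e2]
    exact Or.inl ⟨hij, hwi, hwj, heq, hmin⟩
  · have hi1 : 1 ≤ i := by omega
    have hjN : j + 1 < N := by
      by_contra hne
      have hj1 : j + 1 = N := by omega
      have hint : 1 ≤ pdepth w i := interior_pos hw hc (by omega) (by omega)
      rw [hj1, hNdef, pdepth_full hw] at heq
      omega
    rcases Nat.even_or_odd i with he | ho
    · -- i even (≥ 2), j odd : new arch (i-1, j+1)
      rw [Nat.even_iff] at he
      have hjo : j % 2 = 1 := by omega
      have esi : sig N i = i - 1 := sig_even he hi0 hNeven hN2
      have esj : sig N j = j + 1 := sig_odd hjo (by omega)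
      rw [esi, esj]
      left
      obtain ⟨b1, hb1, hb1'⟩ := doubling hw hc (m := i - 1) (by omega) (by omega)
      rw [show i - 1 + 1 = i by omega] at hb1'
      have hb1t : b1 = true := Option.some_inj.mp (hb1'.symm.trans hwi)
      subst hb1t
      obtain ⟨b2, hb2, hb2'⟩ := doubling hw hc (m := j) hjo (by omega)
      have hb2f : b2 = false := Option.some_inj.mp (hb2.symm.trans hwj)
      subst hb2f
      have e1 := pdepth_succ_true hb1
      rw [show i - 1 + 1 = i by omega] at e1
      have e2 := pdepth_succ_false hb2'
      have e3 := pdepth_succ_false hwj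
      refine ⟨by omega, hb1, hb2', by omega, ?_⟩
      intro m hm1 hm2
      by_cases hmi : m = i
      · subst hmi; omega
      · by_cases hmj : m = j + 1
        · subst hmj; omega
        · have := hmin m (by omega) (by omega)
          omega
    · -- i odd, j even : new arch (i+1, j-1)
      rw [Nat.odd_iff] at ho
      have hje : j % 2 = 0 := by omega
      obtain ⟨b0, hb0, hb0'⟩ := doubling hw hc (m := i) ho (by omega)
      have hb0t : b0 = true := Option.some_inj.mp (hb0.symm.trans hwi)
      subst hb0t
      have hj3 : i + 3 ≤ j := by
        rcases Nat.lt_or_ge (i+1) j with h | h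
        · omega
        · exfalso
          have hji : j = i + 1 := by omega
          rw [← hji] at hb0'
          exact Bool.noConfusion (Option.some_inj.mp (hb0'.symm.trans hwj))
      have esi : sig N i = i + 1 := sig_odd ho (by omega)
      have esj : sig N j = j - 1 := sig_even hje (by omega) hNeven hN2
      rw [esi, esj]
      left
      obtain ⟨b2, hb2, hb2'⟩ := doubling hw hc (m := j - 1) (by omega) (by omega)
      rw [show j - 1 + 1 = j by omega] at hb2'
      have hb2f : b2 = false := Option.some_inj.mp (hb2'.symm.trans hwj)
      subst hb2f
      have e1 := pdepth_succ_true hwi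
      have e2 := pdepth_succ_false hb2
      rw [show j - 1 + 1 = j by omega] at e2
      have e3 := pdepth_succ_false hwj
      refine ⟨by omega, hb0', hb2, by rw [show j - 1 + 1 = j by omega]; omega, ?_⟩
      intro m hm1 hm2
      -- need pdepth w m > pdepth w (i+1) = pdepth w i + 1 for i+1 < m ≤ j-1
      have hbase := hmin m (by omega) (by omega)
      by_contra hle
      push_neg at hle
      have hmeq : pdepth w m = pdepth w i + 1 := by omega
      have pm := pdepth_parity (w := w) (i := m) (by omega)
      have pi := pdepth_parity (w := w) (i := i) (by omega)
      have hme : m % 2 = 0 := by omega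
      obtain ⟨b3, hb3, hb3'⟩ := doubling hw hc (m := m - 1) (by omega) (by omega)
      rw [show m - 1 + 1 = m by omega] at hb3'
      rcases b3 with _ | _
      · have f2 := pdepth_succ_false hb3'
        have := hmin (m+1) (by omega) (by omega)
        omega
      · have f1 := pdepth_succ_true hb3
        rw [show m - 1 + 1 = m by omega] at f1
        have := hmin (m-1) (by omega) (by omega)
        omega

lemma zmod2_of_mod_ne {a b : ℕ} (h : a % 2 ≠ b % 2) : (a : ZMod 2) = (b : ZMod 2) + 1 := by
  conv_lhs => rw [← ZMod.natCast_mod a 2]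
  conv_rhs => rw [← ZMod.natCast_mod b 2]
  have h' : a % 2 = 0 ∧ b % 2 = 1 ∨ a % 2 = 1 ∧ b % 2 = 0 := by omega
  rcases h' with ⟨h1, h2⟩ | ⟨h1, h2⟩ <;> rw [h1, h2] <;> decide

lemma zmod2_swap {a b : ZMod 2} (h : a = b + 1) : b = a + 1 := by
  have h2 : (1+1 : ZMod 2) = 0 := by decide
  rw [h, add_assoc, h2, add_zero]

lemma odd_card_of_involutive_unique_fixed {α : Type*} [Fintype α]
    (f : α → α) (hf : Function.Involutive f) (a0 : α) (hfix : ∀ a, f a = a ↔ a = a0) :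
    Odd (Fintype.card α) := by
  classical
  have hfa0 : f a0 = a0 := (hfix a0).mpr rfl
  have key : ∑ _a ∈ Finset.univ.erase a0, (1 : ZMod 2) = 0 := by
    apply Finset.sum_involution (g := fun a _ => f a)
    · intro a ha; decide
    · intro a ha _ hfe
      exact (Finset.ne_of_mem_erase ha) ((hfix a).mp hfe)
    · intro a ha
      apply Finset.mem_erase_of_ne_of_mem _ (Finset.mem_univ _)
      intro hfe
      exact (Finset.ne_of_mem_erase ha) (by rw [← hf a, hfe, hfa0])
    · intro a ha
      exact hf a
  rw [Finset.sum_const, Finset.card_erase_of_mem (Finset.mem_univ a0), nsmul_eq_mul,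
    mul_one] at key
  have hdvd : 2 ∣ Finset.univ.card - 1 :=
    (ZMod.natCast_eq_zero_iff _ 2).mp key
  have hpos : 0 < Finset.univ.card := Finset.card_pos.mpr ⟨a0, Finset.mem_univ a0⟩
  rw [Finset.card_univ] at hdvd hpos
  rw [Nat.odd_iff]
  omega

end MeanderParity

/-- For Dyck paths `P, Q` of size `2k+1` with no bad corner, `traj(P,Q)` is odd. -/
theorem trajPQ_odd_on_fixed_points (k : ℕ) (P Q : List Bool)
    (hP : IsDyckPath (2 * k + 1) P) (hPc : NoBadCorner P)
    (hQ : IsDyckPath (2 * k + 1) Q) (hQc : NoBadCorner Q) :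
    Odd (trajPQ (2 * k + 1) P Q) := by
  classical
  have hPl : P.length = 2 * (2*k+1) := hP.1
  have hQl : Q.length = 2 * (2*k+1) := hQ.1
  set N := 2 * (2*k+1) with hNdef
  have hN2 : 2 ≤ N := by omega
  have hNe : N % 2 = 0 := by omega
  set G := meanderGraph (2 * (2*k+1)) (Matches P) (Matches Q) with hGdef
  -- the involution on vertices
  let σ : Fin (2 * (2*k+1)) → Fin (2 * (2*k+1)) :=
    fun x => ⟨MeanderParity.sig N x.1, MeanderParity.sig_lt hNe hN2 x.2⟩
  have hσinv : ∀ x, σ (σ x) = x := by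
    intro x
    apply Fin.ext
    exact MeanderParity.sig_invol hNe hN2 x.2
  -- σ preserves adjacency
  have hadjmap : ∀ u v : Fin (2 * (2*k+1)), G.Adj u v → G.Adj (σ u) (σ v) := by
    intro u v huv
    have huv' : u ≠ v ∧ (Matches P u.1 v.1 ∨ Matches P v.1 u.1 ∨
        Matches Q u.1 v.1 ∨ Matches Q v.1 u.1) := huv
    have hne : σ u ≠ σ v := by
      intro hee
      apply huv'.1
      rw [← hσinv u, ← hσinv v, hee]
    have hor : Matches P (σ u).1 (σ v).1 ∨ Matches P (σ v).1 (σ u).1 ∨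
        Matches Q (σ u).1 (σ v).1 ∨ Matches Q (σ v).1 (σ u).1 := by
      rcases huv'.2 with h | h | h | h
      · rcases MeanderParity.matches_sig hP hPc h with h' | h' <;> rw [hPl] at h'
        · exact Or.inl h'
        · exact Or.inr (Or.inl h')
      · rcases MeanderParity.matches_sig hP hPc h with h' | h' <;> rw [hPl] at h'
        · exact Or.inr (Or.inl h')
        · exact Or.inl h'
      · rcases MeanderParity.matches_sig hQ hQc h with h' | h' <;> rw [hQl] at h'
        · exact Or.inr (Or.inr (Or.inl h'))
        · exact Or.inr (Or.inr (Or.inr h'))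
      · rcases MeanderParity.matches_sig hQ hQc h with h' | h' <;> rw [hQl] at h'
        · exact Or.inr (Or.inr (Or.inr h'))
        · exact Or.inr (Or.inr (Or.inl h'))
    exact ⟨hne, hor⟩
  let hom : G →g G := ⟨σ, fun {u v} h => hadjmap u v h⟩
  let f : G.ConnectedComponent → G.ConnectedComponent :=
    SimpleGraph.ConnectedComponent.map hom
  have hfmk : ∀ v, f (G.connectedComponentMk v) = G.connectedComponentMk (σ v) := by
    intro v
    rfl
  have hfinv : Function.Involutive f := by
    intro C
    refine SimpleGraph.ConnectedComponent.ind (fun v => ?_) C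
    rw [hfmk, hfmk, hσinv]
  -- edge flip invariants
  have edge_flip : ∀ u v : Fin (2 * (2*k+1)), G.Adj u v →
      ((u.1 : ZMod 2) = (v.1 : ZMod 2) + 1 ∧
        (((u.1+1)/2 : ℕ) : ZMod 2) = (((v.1+1)/2 : ℕ) : ZMod 2) + 1) := by
    intro u v huv
    have huv' : u ≠ v ∧ (Matches P u.1 v.1 ∨ Matches P v.1 u.1 ∨
        Matches Q u.1 v.1 ∨ Matches Q v.1 u.1) := huv
    have hb : u.1 % 2 ≠ v.1 % 2 ∧ ((u.1+1)/2) % 2 ≠ ((v.1+1)/2) % 2 := by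
      rcases huv'.2 with h | h | h | h
      · exact ⟨MeanderParity.arch_parity h, MeanderParity.arch_flip_h hP hPc h⟩
      · exact ⟨(MeanderParity.arch_parity h).symm, (MeanderParity.arch_flip_h hP hPc h).symm⟩
      · exact ⟨MeanderParity.arch_parity h, MeanderParity.arch_flip_h hQ hQc h⟩
      · exact ⟨(MeanderParity.arch_parity h).symm, (MeanderParity.arch_flip_h hQ hQc h).symm⟩
    exact ⟨MeanderParity.zmod2_of_mod_ne hb.1, MeanderParity.zmod2_of_mod_ne hb.2⟩
  -- walk parity
  have walk_flip : ∀ (u v : Fin (2 * (2*k+1))) (p : G.Walk u v),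
      ((u.1 : ZMod 2) = (v.1 : ZMod 2) + p.length ∧
        (((u.1+1)/2 : ℕ) : ZMod 2) = (((v.1+1)/2 : ℕ) : ZMod 2) + p.length) := by
    intro u v p
    induction p with
    | nil => simp
    | @cons a b c h q ih =>
      obtain ⟨e1, e2⟩ := edge_flip _ _ h
      obtain ⟨i1, i2⟩ := ih
      rw [SimpleGraph.Walk.length_cons]
      constructor
      · push_cast
        rw [e1, i1]
        ring
      · push_cast
        rw [e2, i2]
        ring
  have h0N : (0 : ℕ) < 2 * (2*k+1) := by omega
  let v0 : Fin (2 * (2*k+1)) := ⟨0, h0N⟩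
  let a0 : G.ConnectedComponent := G.connectedComponentMk v0
  -- the top arches
  have htopP : Matches P 0 (N-1) := by
    have := MeanderParity.top_arch hP hPc (by omega)
    rwa [hPl] at this
  have hvN : N - 1 < 2 * (2*k+1) := by omega
  have hadj0 : G.Adj v0 ⟨N-1, hvN⟩ := by
    refine ⟨?_, Or.inl htopP⟩
    intro hee
    have := congrArg Fin.val hee
    simp only [v0] at this
    omega
  -- unique fixed component
  have hfix : ∀ C, f C = C ↔ C = a0 := by
    intro C
    constructor
    · refine SimpleGraph.ConnectedComponent.ind (fun v => ?_) C
      intro hfC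
      rw [hfmk] at hfC
      have hreach : G.Reachable (σ v) v := SimpleGraph.ConnectedComponent.eq.mp hfC
      by_cases hv0 : v.1 = 0
      · have hv : v = v0 := Fin.ext hv0
        rw [hv]
      · by_cases hvN' : v.1 = N - 1
        · have hv : v = ⟨N-1, hvN⟩ := Fin.ext hvN'
          rw [hv]
          exact (SimpleGraph.ConnectedComponent.eq.mpr hadj0.reachable).symm
        · exfalso
          obtain ⟨p⟩ := hreach
          obtain ⟨w1, w2⟩ := walk_flip _ _ p
          have hσv : (σ v).1 = MeanderParity.sig N v.1 := rfl
          -- flip facts for sig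
          have hs1 : ((MeanderParity.sig N v.1 : ℕ) : ZMod 2) = (v.1 : ZMod 2) + 1 := by
            rcases Nat.even_or_odd v.1 with he | ho
            · rw [Nat.even_iff] at he
              rw [MeanderParity.sig_even he hv0 hNe hN2]
              have hx1 : v.1 - 1 + 1 = v.1 := by omega
              apply MeanderParity.zmod2_swap
              rw [← hx1]
              push_cast
              ring
            · rw [Nat.odd_iff] at ho
              rw [MeanderParity.sig_odd ho hvN']
              push_cast
              ring
          have hs2 : ((MeanderParity.sig N v.1) + 1) / 2 = (v.1 + 1) / 2 := by
            rcases Nat.even_or_odd v.1 with he | ho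
            · rw [Nat.even_iff] at he
              rw [MeanderParity.sig_even he hv0 hNe hN2]
              omega
            · rw [Nat.odd_iff] at ho
              rw [MeanderParity.sig_odd ho hvN']
              omega
          rw [hσv, hs1] at w1
          rw [hσv, hs2] at w2
          -- w1 : v + 1 = v + len, w2 : h = h + len
          have hl1 : ((p.length : ℕ) : ZMod 2) = 1 := (add_left_cancel w1).symm
          have hl0 : ((p.length : ℕ) : ZMod 2) = 0 := left_eq_add.mp w2
          rw [hl1] at hl0
          exact one_ne_zero hl0
    · intro h
      rw [h]
      have : σ v0 = v0 := by
        apply Fin.ext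
        exact MeanderParity.sig_zero N
      show f (G.connectedComponentMk v0) = _
      rw [hfmk, this]
  -- conclude
  unfold trajPQ
  haveI : Fintype G.ConnectedComponent := Fintype.ofFinite _
  rw [show (meanderGraph (2 * (2*k+1)) (Matches P) (Matches Q)) = G from rfl]
  rw [Nat.card_eq_fintype_card]
  exact MeanderParity.odd_card_of_involutive_unique_fixed f hfinv a0 hfix
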